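/- arXiv:1512.08278 — 3 statements merged into one kernel-verified Lean document; each statement's English description precedes it below -/
import Mathlib

section
/- Let N ≥ 1 and let σ be a Hermitian matrix on ℂ² ⊗ ℂ^N. If (Tr(σ)/(2N-1))·𝟙_{2N} - σ is positive semidefinite, then σ is separable. -/
open Matrix Kronecker
open scoped ComplexOrder

noncomputable section

/-- A Hermitian matrix on ℂ^M ⊗ ℂ^N is separable if it is a finite sum of Kronecker
products of positive semidefinite matrices. -/
def IsSeparableMat {M N : ℕ} (σ : Matrix (Fin M × Fin N) (Fin M × Fin N) ℂ) : Prop :=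
  ∃ (k : ℕ) (A : Fin k → Matrix (Fin M) (Fin M) ℂ) (B : Fin k → Matrix (Fin N) (Fin N) ℂ),
    (∀ i, (A i).PosSemidef) ∧ (∀ i, (B i).PosSemidef) ∧ σ = ∑ i, A i ⊗ₖ B i

/-- Partial transpose on the first (Alice) factor. -/
def ptA {M N : ℕ} (ρ : Matrix (Fin M × Fin N) (Fin M × Fin N) ℂ) :
    Matrix (Fin M × Fin N) (Fin M × Fin N) ℂ :=
  fun p q => ρ (q.1, p.2) (p.1, q.2)

/-- Partial transpose on the second (Bob) factor. -/
def ptB {M N : ℕ} (ρ : Matrix (Fin M × Fin N) (Fin M × Fin N) ℂ) :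
    Matrix (Fin M × Fin N) (Fin M × Fin N) ℂ :=
  fun p q => ρ (p.1, q.2) (q.1, p.2)

/-- The second Pauli matrix σ₂. -/
def pauli2 : Matrix (Fin 2) (Fin 2) ℂ := !![0, -Complex.I; Complex.I, 0]

/-- ρ̃_A = (σ₂ ⊗ 𝟙_N) ρ^{T_A} (σ₂ ⊗ 𝟙_N). -/
def tildeA {N : ℕ} (ρ : Matrix (Fin 2 × Fin N) (Fin 2 × Fin N) ℂ) :
    Matrix (Fin 2 × Fin N) (Fin 2 × Fin N) ℂ :=
  (pauli2 ⊗ₖ (1 : Matrix (Fin N) (Fin N) ℂ)) * ptA ρ *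
    (pauli2 ⊗ₖ (1 : Matrix (Fin N) (Fin N) ℂ))

end

set_option linter.unusedSectionVars false
set_option linter.unusedVariables false
set_option maxHeartbeats 1000000

noncomputable section
namespace Sep
variable {n m : Type*} [Fintype n] [Fintype m] [DecidableEq n] [DecidableEq m]

/-- outer product vvᴴ -/
def outer (v : n → ℂ) : Matrix n n ℂ := vecMulVec v (star v)

lemma outer_apply (v : n → ℂ) (i j : n) : outer v i j = v i * star (v j) := by
  simp [outer, vecMulVec_apply]

lemma outer_conjTranspose (v : n → ℂ) : (outer v)ᴴ = outer v := by
  ext i j; simp [outer_apply, conjTranspose_apply, mul_comm]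

lemma outer_isHermitian (v : n → ℂ) : (outer v).IsHermitian := outer_conjTranspose v

lemma outer_posSemidef (v : n → ℂ) : (outer v).PosSemidef := by
  refine .of_dotProduct_mulVec_nonneg (outer_isHermitian v) fun x => ?_
  have : star x ⬝ᵥ (outer v *ᵥ x) = star (star v ⬝ᵥ x) * (star v ⬝ᵥ x) := by
    simp only [dotProduct, mulVec, outer_apply, star_sum, Pi.star_apply, Finset.sum_mul,
      Finset.mul_sum, star_mul', star_star]
    rw [Finset.sum_comm]
    exact Finset.sum_congr rfl fun i _ => Finset.sum_congr rfl fun j _ => by ring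
  rw [this]
  exact star_mul_self_nonneg _

lemma outer_mul_outer (a b : n → ℂ) :
    outer a * outer b = (star a ⬝ᵥ b) • vecMulVec a (star b) := by
  ext i j
  simp only [mul_apply, outer_apply, Matrix.smul_apply, vecMulVec_apply, dotProduct, Pi.star_apply,
    smul_eq_mul, Finset.sum_mul, Finset.mul_sum]
  exact Finset.sum_congr rfl fun k _ => by ring

lemma outer_mulVec (M : Matrix m n ℂ) (x : n → ℂ) :
    outer (M *ᵥ x) = M * outer x * Mᴴ := by
  ext i j
  simp only [outer_apply, mulVec, mul_apply, conjTranspose_apply, dotProduct, star_sum,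
    Pi.star_apply, star_mul', Finset.sum_mul, Finset.mul_sum]
  refine Finset.sum_congr rfl fun k _ => Finset.sum_congr rfl fun l _ => by ring


section Closure
variable {M N : ℕ}
lemma sep_zero : IsSeparableMat (0 : Matrix (Fin M × Fin N) (Fin M × Fin N) ℂ) :=
  ⟨0, ![], ![], fun i => i.elim0, fun i => i.elim0, by simp⟩

lemma sep_add {σ τ : Matrix (Fin M × Fin N) (Fin M × Fin N) ℂ}
    (hσ : IsSeparableMat σ) (hτ : IsSeparableMat τ) : IsSeparableMat (σ + τ) := by
  obtain ⟨k, A, B, hA, hB, rfl⟩ := hσ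
  obtain ⟨k', A', B', hA', hB', rfl⟩ := hτ
  refine ⟨k + k', fun i => Fin.addCases A A' i, fun i => Fin.addCases B B' i, ?_, ?_, ?_⟩
  · intro i; refine Fin.addCases (fun i => by simpa using hA i) (fun i => by simpa using hA' i) i
  · intro i; refine Fin.addCases (fun i => by simpa using hB i) (fun i => by simpa using hB' i) i
  · rw [Fin.sum_univ_add]; simp

lemma sep_smul {σ : Matrix (Fin M × Fin N) (Fin M × Fin N) ℂ} (c : ℝ) (hc : 0 ≤ c)
    (hσ : IsSeparableMat σ) : IsSeparableMat ((c : ℂ) • σ) := by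
  obtain ⟨k, A, B, hA, hB, rfl⟩ := hσ
  refine ⟨k, fun i => (c : ℂ) • A i, B, fun i => ?_, hB, ?_⟩
  · refine .of_dotProduct_mulVec_nonneg ?_ ?_
    · have := (hA i).1
      unfold Matrix.IsHermitian at *
      rw [conjTranspose_smul, this]
      congr 1
      simp [Complex.ext_iff]
    · intro x
      rw [smul_mulVec, dotProduct_smul]
      exact smul_nonneg (by exact_mod_cast hc) ((hA i).dotProduct_mulVec_nonneg x)
  · rw [Finset.smul_sum]
    exact Finset.sum_congr rfl fun i _ => (smul_kronecker _ _ _).symm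

lemma sep_sum {ι : Type} [Fintype ι] (f : ι → Matrix (Fin M × Fin N) (Fin M × Fin N) ℂ)
    (hf : ∀ i, IsSeparableMat (f i)) : IsSeparableMat (∑ i, f i) := by
  classical
  refine Finset.sum_induction f IsSeparableMat (fun a b ha hb => sep_add ha hb) sep_zero
    (fun i _ => hf i)

lemma sep_conj {σ : Matrix (Fin M × Fin N) (Fin M × Fin N) ℂ}
    (Y : Matrix (Fin M) (Fin M) ℂ) (hσ : IsSeparableMat σ) :
    IsSeparableMat ((Y ⊗ₖ (1 : Matrix (Fin N) (Fin N) ℂ)) * σ *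
      (Y ⊗ₖ (1 : Matrix (Fin N) (Fin N) ℂ))ᴴ) := by
  obtain ⟨k, A, B, hA, hB, rfl⟩ := hσ
  refine ⟨k, fun i => Y * A i * Yᴴ, B, fun i => (hA i).mul_mul_conjTranspose_same Y, hB, ?_⟩
  rw [Finset.mul_sum, Finset.sum_mul]
  refine Finset.sum_congr rfl fun i _ => ?_
  rw [show (Y ⊗ₖ (1 : Matrix (Fin N) (Fin N) ℂ))ᴴ = Yᴴ ⊗ₖ (1 : Matrix (Fin N) (Fin N) ℂ) by
    ext ⟨a,b⟩ ⟨c,d⟩; simp [conjTranspose_apply, kroneckerMap_apply, Matrix.one_apply, eq_comm, apply_ite (starRingEnd ℂ)]]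
  rw [← mul_kronecker_mul, ← mul_kronecker_mul, mul_one, one_mul]

end Closure

lemma sq_one_sub_outer (s : n → ℂ) (nn α : ℝ) (hn : star s ⬝ᵥ s = (nn : ℂ))
    (hα : 0 ≤ α) (h : α * nn ≤ 1) :
    ∃ γ : ℝ, ((1 : Matrix n n ℂ) - (γ:ℂ) • outer s) * ((1 : Matrix n n ℂ) - (γ:ℂ) • outer s)
      = 1 - (α:ℂ) • outer s := by
  have hself : outer s * outer s = ((nn:ℂ)) • outer s := by
    rw [outer_mul_outer, hn]; rfl
  rcases eq_or_lt_of_le (by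
      have h0 : (0:ℂ) ≤ (nn:ℂ) := hn ▸ dotProduct_star_self_nonneg s
      exact Complex.zero_le_real.mp h0) with h0 | hpos
  · -- nn = 0, so s = 0
    have hs : s = 0 := by
      rw [← dotProduct_star_self_eq_zero (v := s), hn, ← h0]; simp
    refine ⟨0, ?_⟩
    have : outer s = 0 := by ext i j; simp [hs, outer, vecMulVec_apply]
    simp [this]
  · set r := Real.sqrt (1 - α * nn) with hr
    have hr2 : r ^ 2 = 1 - α * nn := Real.sq_sqrt (by linarith)
    refine ⟨(1 - r) / nn, ?_⟩
    have key : 2 * ((1 - r)/nn) - ((1 - r)/nn)^2 * nn = α := by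
      field_simp
      nlinarith [hr2]
    have expand : ((1 : Matrix n n ℂ) - (((1 - r)/nn : ℝ):ℂ) • outer s) *
        ((1 : Matrix n n ℂ) - (((1 - r)/nn : ℝ):ℂ) • outer s)
        = 1 - ((2 * ((1 - r)/nn) - ((1 - r)/nn)^2 * nn : ℝ):ℂ) • outer s := by
      simp only [sub_mul, mul_sub, one_mul, mul_one, smul_mul_assoc, mul_smul_comm, hself,
        smul_smul]
      push_cast
      ring_nf
      module
    rw [expand, key]

lemma key_psd (s₀ s₁ : n → ℂ) (horth : star s₀ ⬝ᵥ s₁ = 0)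
    (n₀ n₁ α β : ℝ) (hn₀ : star s₀ ⬝ᵥ s₀ = (n₀:ℂ)) (hn₁ : star s₁ ⬝ᵥ s₁ = (n₁:ℂ))
    (hα : 0 ≤ α) (hβ : 0 ≤ β) (h₀ : α * n₀ ≤ 1) (h₁ : β * n₁ ≤ 1) :
    ((1 : Matrix n n ℂ) - (α:ℂ) • outer s₀ - (β:ℂ) • outer s₁).PosSemidef := by
  have horth' : star s₁ ⬝ᵥ s₀ = 0 := by
    have : star s₁ ⬝ᵥ s₀ = star (star s₀ ⬝ᵥ s₁) := by
      simp [dotProduct, star_sum, mul_comm]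
    rw [this, horth, star_zero]
  have h01 : outer s₀ * outer s₁ = 0 := by rw [outer_mul_outer, horth, zero_smul]
  have h10 : outer s₁ * outer s₀ = 0 := by rw [outer_mul_outer, horth', zero_smul]
  obtain ⟨γ₀, hγ₀⟩ := sq_one_sub_outer s₀ n₀ α hn₀ hα h₀
  obtain ⟨γ₁, hγ₁⟩ := sq_one_sub_outer s₁ n₁ β hn₁ hβ h₁
  set E₀ : Matrix n n ℂ := 1 - (γ₀:ℂ) • outer s₀ with hE₀
  set E₁ : Matrix n n ℂ := 1 - (γ₁:ℂ) • outer s₁ with hE₁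
  have hcomm : E₀ * E₁ = E₁ * E₀ := by
    simp only [hE₀, hE₁, sub_mul, mul_sub, one_mul, mul_one, smul_mul_assoc, mul_smul_comm,
      h01, h10, smul_zero, sub_zero, smul_sub]
    abel
  have hherm0 : E₀ᴴ = E₀ := by
    simp [hE₀, conjTranspose_smul, outer_conjTranspose, Complex.ext_iff]
  have hherm1 : E₁ᴴ = E₁ := by
    simp [hE₁, conjTranspose_smul, outer_conjTranspose, Complex.ext_iff]
  have comm2 : E₀ * (E₁ * E₁) = (E₁ * E₁) * E₀ := by
    rw [← mul_assoc, hcomm, mul_assoc, hcomm, ← mul_assoc]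
  have hprod : E₀ * E₁ * (E₁ * E₀) = 1 - (α:ℂ) • outer s₀ - (β:ℂ) • outer s₁ := by
    have e1 : E₀ * E₁ * (E₁ * E₀) = E₀ * (E₁ * E₁) * E₀ := by noncomm_ring
    rw [e1, comm2, mul_assoc, hγ₀, hγ₁]
    simp only [sub_mul, mul_sub, one_mul, mul_one, smul_mul_assoc, mul_smul_comm,
      h10, smul_zero, sub_zero, smul_sub]
    abel
  have hM : (1 : Matrix n n ℂ) - (α:ℂ) • outer s₀ - (β:ℂ) • outer s₁
      = (E₁ * E₀)ᴴ * (E₁ * E₀) := by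
    rw [conjTranspose_mul, hherm0, hherm1]
    exact hprod.symm
  exact hM ▸ posSemidef_conjTranspose_mul_self (E₁ * E₀)

lemma posSemidef_real_smul {M : Matrix n n ℂ} (c : ℝ) (hc : 0 ≤ c) (h : M.PosSemidef) :
    ((c:ℂ) • M).PosSemidef := by
  refine .of_dotProduct_mulVec_nonneg ?_ ?_
  · have := h.1
    unfold Matrix.IsHermitian at *
    rw [conjTranspose_smul, this]
    congr 1
    simp [Complex.ext_iff]
  · intro x
    rw [smul_mulVec, dotProduct_smul]
    exact smul_nonneg (by exact_mod_cast hc) (h.dotProduct_mulVec_nonneg x)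


lemma sep_of_two {M N : ℕ} {σ : Matrix (Fin M × Fin N) (Fin M × Fin N) ℂ}
    (A0 A1 : Matrix (Fin M) (Fin M) ℂ) (B0 B1 : Matrix (Fin N) (Fin N) ℂ)
    (hA0 : A0.PosSemidef) (hA1 : A1.PosSemidef) (hB0 : B0.PosSemidef) (hB1 : B1.PosSemidef)
    (hid : σ = A0 ⊗ₖ B0 + A1 ⊗ₖ B1) : IsSeparableMat σ := by
  refine ⟨2, ![A0, A1], ![B0, B1], ?_, ?_, ?_⟩
  · intro i; fin_cases i; exacts [hA0, hA1]
  · intro i; fin_cases i; exacts [hB0, hB1]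
  · rw [Fin.sum_univ_two]; exact hid

lemma sep_of_six {M N : ℕ} {σ : Matrix (Fin M × Fin N) (Fin M × Fin N) ℂ}
    (A0 A1 A2 A3 A4 A5 : Matrix (Fin M) (Fin M) ℂ)
    (B0 B1 B2 B3 B4 B5 : Matrix (Fin N) (Fin N) ℂ)
    (hA0 : A0.PosSemidef) (hA1 : A1.PosSemidef) (hA2 : A2.PosSemidef)
    (hA3 : A3.PosSemidef) (hA4 : A4.PosSemidef) (hA5 : A5.PosSemidef)
    (hB0 : B0.PosSemidef) (hB1 : B1.PosSemidef) (hB2 : B2.PosSemidef)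
    (hB3 : B3.PosSemidef) (hB4 : B4.PosSemidef) (hB5 : B5.PosSemidef)
    (hid : σ = A0 ⊗ₖ B0 + A1 ⊗ₖ B1 + A2 ⊗ₖ B2 + A3 ⊗ₖ B3 + A4 ⊗ₖ B4 + A5 ⊗ₖ B5) :
    IsSeparableMat σ := by
  refine ⟨6, ![A0, A1, A2, A3, A4, A5], ![B0, B1, B2, B3, B4, B5], ?_, ?_, ?_⟩
  · intro i; fin_cases i; exacts [hA0, hA1, hA2, hA3, hA4, hA5]
  · intro i; fin_cases i; exacts [hB0, hB1, hB2, hB3, hB4, hB5]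
  · rw [Fin.sum_univ_six]; exact hid

lemma sep_one_sub_outer_rows {N : ℕ} (ψ : Fin 2 × Fin N → ℂ) (n₀ n₁ : ℝ)
    (hn₀ : star (fun j => ψ (0,j)) ⬝ᵥ (fun j => ψ (0,j)) = (n₀:ℂ))
    (hn₁ : star (fun j => ψ (1,j)) ⬝ᵥ (fun j => ψ (1,j)) = (n₁:ℂ))
    (horth : star (fun j => ψ (0,j)) ⬝ᵥ (fun j => ψ (1,j)) = 0)
    (hsum : n₀ + n₁ = 1) :
    IsSeparableMat ((1 : Matrix (Fin 2 × Fin N) (Fin 2 × Fin N) ℂ) - outer ψ) := by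
  set s₀ : Fin N → ℂ := fun j => ψ (0,j) with hs₀
  set s₁ : Fin N → ℂ := fun j => ψ (1,j) with hs₁
  have hpsi0 : ∀ j, ψ (0,j) = s₀ j := fun _ => rfl
  have hpsi1 : ∀ j, ψ (1,j) = s₁ j := fun _ => rfl
  have hz0 : star (0 : Fin N → ℂ) ⬝ᵥ (0 : Fin N → ℂ) = ((0:ℝ):ℂ) := by simp
  have hn₀nonneg : 0 ≤ n₀ := Complex.zero_le_real.mp (hn₀ ▸ dotProduct_star_self_nonneg _)
  have hn₁nonneg : 0 ≤ n₁ := Complex.zero_le_real.mp (hn₁ ▸ dotProduct_star_self_nonneg _)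
  have hn1 : n₁ = 1 - n₀ := by linarith
  subst hn1
  rcases eq_or_lt_of_le hn₀nonneg with h0 | h0pos
  · -- s₀ = 0
    have hz : s₀ = 0 := by rw [← dotProduct_star_self_eq_zero (v := s₀), hn₀, ← h0]; simp
    refine sep_of_two (outer ![1,0]) (outer ![0,1]) 1
      (1 - ((1:ℝ):ℂ) • outer s₁ - ((0:ℝ):ℂ) • outer (0 : Fin N → ℂ))
      (outer_posSemidef _) (outer_posSemidef _) Matrix.PosSemidef.one
      (key_psd s₁ 0 (by simp) (1-n₀) 0 1 0 hn₁ hz0 zero_le_one le_rfl (by linarith) (by simp)) ?_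
    have hz' : ∀ j, s₀ j = 0 := fun j => congrFun hz j
    ext ⟨i,j⟩ ⟨k,l⟩
    fin_cases i <;> fin_cases k <;>
      simp [Matrix.add_apply, kroneckerMap_apply, outer_apply, Matrix.one_apply, Prod.ext_iff,
        Fin.mk_zero, Fin.mk_one, hpsi0, hpsi1, hz', Matrix.smul_apply, Matrix.sub_apply]
  rcases eq_or_lt_of_le (by linarith : n₀ ≤ 1) with h1 | h1lt
  · -- s₁ = 0
    have hz : s₁ = 0 := by
      rw [← dotProduct_star_self_eq_zero (v := s₁), hn₁, ← h1]; simp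
    refine sep_of_two (outer ![1,0]) (outer ![0,1])
      (1 - ((1:ℝ):ℂ) • outer s₀ - ((0:ℝ):ℂ) • outer (0 : Fin N → ℂ)) 1
      (outer_posSemidef _) (outer_posSemidef _)
      (key_psd s₀ 0 (by simp) n₀ 0 1 0 hn₀ hz0 zero_le_one le_rfl (by linarith) (by simp))
      Matrix.PosSemidef.one ?_
    have hz' : ∀ j, s₁ j = 0 := fun j => congrFun hz j
    ext ⟨i,j⟩ ⟨k,l⟩
    fin_cases i <;> fin_cases k <;>
      simp [Matrix.add_apply, kroneckerMap_apply, outer_apply, Matrix.one_apply, Prod.ext_iff,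
        Fin.mk_zero, Fin.mk_one, hpsi0, hpsi1, hz', Matrix.smul_apply, Matrix.sub_apply]
  · -- main case : 0 < n₀ < 1
    set m₁ : ℝ := 1 - n₀ with hm₁
    have hm₁pos : 0 < m₁ := by simp only [hm₁]; linarith
    have hn₀ne : (n₀:ℂ) ≠ 0 := by exact_mod_cast h0pos.ne'
    have hm₁ne : ((m₁:ℝ):ℂ) ≠ 0 := by exact_mod_cast hm₁pos.ne'
    have hkey4 := key_psd s₀ s₁ horth n₀ m₁ (1/n₀) (n₀/m₁) hn₀ hn₁ (by positivity) (by positivity)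
          (by rw [one_div, inv_mul_cancel₀ h0pos.ne']) (by rw [div_mul_cancel₀ _ hm₁pos.ne']; linarith)
    have hkey5 := key_psd s₀ s₁ horth n₀ m₁ (m₁/n₀) (1/m₁) hn₀ hn₁ (by positivity) (by positivity)
          (by rw [div_mul_cancel₀ _ h0pos.ne']; linarith) (by rw [one_div, inv_mul_cancel₀ hm₁pos.ne'])
    refine sep_of_six
      (((m₁/n₀ : ℝ):ℂ) • outer ![1, 1]) (((m₁/n₀ : ℝ):ℂ) • outer ![1, Complex.I])
      (((m₁/n₀ : ℝ):ℂ) • outer ![1, -1]) (((m₁/n₀ : ℝ):ℂ) • outer ![1, -Complex.I])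
      (outer ![1,0]) (outer ![0,1])
      (((1/4 : ℝ):ℂ) • outer (fun j => s₀ j - ((n₀/m₁ : ℝ):ℂ) * s₁ j))
      (((1/4 : ℝ):ℂ) • outer (fun j => s₀ j - (-Complex.I) * ((n₀/m₁ : ℝ):ℂ) * s₁ j))
      (((1/4 : ℝ):ℂ) • outer (fun j => s₀ j - (-1) * ((n₀/m₁ : ℝ):ℂ) * s₁ j))
      (((1/4 : ℝ):ℂ) • outer (fun j => s₀ j - Complex.I * ((n₀/m₁ : ℝ):ℂ) * s₁ j))
      (1 - ((1/n₀ : ℝ):ℂ) • outer s₀ - ((n₀/m₁ : ℝ):ℂ) • outer s₁)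
      (1 - ((m₁/n₀ : ℝ):ℂ) • outer s₀ - ((1/m₁ : ℝ):ℂ) • outer s₁)
      (posSemidef_real_smul _ (by positivity) (outer_posSemidef _))
      (posSemidef_real_smul _ (by positivity) (outer_posSemidef _))
      (posSemidef_real_smul _ (by positivity) (outer_posSemidef _))
      (posSemidef_real_smul _ (by positivity) (outer_posSemidef _))
      (outer_posSemidef _) (outer_posSemidef _)
      (posSemidef_real_smul _ (by norm_num) (outer_posSemidef _))
      (posSemidef_real_smul _ (by norm_num) (outer_posSemidef _))
      (posSemidef_real_smul _ (by norm_num) (outer_posSemidef _))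
      (posSemidef_real_smul _ (by norm_num) (outer_posSemidef _))
      hkey4 hkey5 ?_
    ext ⟨i,j⟩ ⟨k,l⟩
    fin_cases i <;> fin_cases k <;>
      · simp only [Matrix.add_apply, kroneckerMap_apply, Matrix.smul_apply, Matrix.sub_apply,
          outer_apply, Matrix.one_apply, Prod.ext_iff, Fin.mk_zero, Fin.mk_one, hpsi0, hpsi1,
          Matrix.cons_val_zero, Matrix.cons_val_one, Matrix.head_cons, Fin.isValue,
          star_sub, star_mul', star_one, star_star, Complex.star_def, Complex.conj_I,
          Complex.conj_ofReal, map_neg, _root_.map_one, _root_.map_mul, star_neg,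
          smul_eq_mul, Pi.star_apply, true_and, Prod.mk.injEq]
        push_cast
        generalize (if j = l then (1:ℂ) else 0) = δ
        field_simp
        ring_nf
        simp only [Complex.I_sq]
        push_cast
        simp only [hm₁, map_zero, mul_zero, zero_mul, false_and, ↓reduceIte]
        push_cast
        ring

lemma kron_one_conjTranspose {M N : ℕ} (Y : Matrix (Fin M) (Fin M) ℂ) :
    (Y ⊗ₖ (1 : Matrix (Fin N) (Fin N) ℂ))ᴴ = Yᴴ ⊗ₖ (1 : Matrix (Fin N) (Fin N) ℂ) := by
  ext ⟨a,b⟩ ⟨c,d⟩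
  simp [conjTranspose_apply, kroneckerMap_apply, Matrix.one_apply, eq_comm,
    apply_ite (starRingEnd ℂ)]

lemma row_dot {N : ℕ} (S : Matrix (Fin 2) (Fin N) ℂ) (i k : Fin 2) :
    star (fun j => S i j) ⬝ᵥ (fun j => S k j) = (S * Sᴴ) k i := by
  simp only [dotProduct, mul_apply, conjTranspose_apply, Pi.star_apply]
  exact Finset.sum_congr rfl fun j _ => by ring

lemma sep_one_sub_outer {N : ℕ} (u : Fin 2 × Fin N → ℂ) (hu : star u ⬝ᵥ u = 1) :
    IsSeparableMat ((1 : Matrix (Fin 2 × Fin N) (Fin 2 × Fin N) ℂ) - outer u) := by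
  classical
  set R : Matrix (Fin 2) (Fin N) ℂ := Matrix.of (fun a j => u (a,j)) with hR
  set W : Matrix (Fin 2) (Fin 2) ℂ := R * Rᴴ with hW
  have hWH : W.IsHermitian := isHermitian_mul_conjTranspose_self R
  set V : Matrix (Fin 2) (Fin 2) ℂ := (hWH.eigenvectorUnitary : Matrix (Fin 2) (Fin 2) ℂ)
    with hV
  set X : Matrix (Fin 2) (Fin 2) ℂ := star V with hX
  have hXuni : Xᴴ * X = 1 := by
    rw [hX, Matrix.star_eq_conjTranspose, conjTranspose_conjTranspose,
      ← Matrix.star_eq_conjTranspose]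
    exact Unitary.coe_mul_star_self hWH.eigenvectorUnitary
  set d : Fin 2 → ℝ := hWH.eigenvalues with hd
  have hdiag : X * W * Xᴴ = diagonal (fun i => (d i : ℂ)) := by
    have := hWH.conjStarAlgAut_star_eigenvectorUnitary
    simp only [Unitary.conjStarAlgAut_apply, Unitary.coe_star, star_star] at this
    rw [hX, Matrix.star_eq_conjTranspose, conjTranspose_conjTranspose]
    exact this
  set ψ : Fin 2 × Fin N → ℂ := fun p => (X * R) p.1 p.2 with hψ
  have hrowdiag : (X * R) * (X * R)ᴴ = diagonal (fun i => (d i : ℂ)) := by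
    rw [conjTranspose_mul, ← Matrix.mul_assoc (X * R) Rᴴ Xᴴ, Matrix.mul_assoc X R Rᴴ, ← hW, hdiag]
  have h00 : star (fun j => ψ (0,j)) ⬝ᵥ (fun j => ψ (0,j)) = ((d 0 : ℝ):ℂ) := by
    rw [row_dot (X * R) 0 0, hrowdiag]; simp [diagonal]
  have h11 : star (fun j => ψ (1,j)) ⬝ᵥ (fun j => ψ (1,j)) = ((d 1 : ℝ):ℂ) := by
    rw [row_dot (X * R) 1 1, hrowdiag]; simp [diagonal]
  have h01 : star (fun j => ψ (0,j)) ⬝ᵥ (fun j => ψ (1,j)) = 0 := by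
    rw [row_dot (X * R) 0 1, hrowdiag]; simp [diagonal]
  have hsum : d 0 + d 1 = 1 := by
    have htr : (X * W * Xᴴ).trace = W.trace := by
      rw [trace_mul_comm, ← mul_assoc, hXuni, one_mul]
    rw [hdiag] at htr
    have hWtr : W.trace = 1 := by
      have : W.trace = star u ⬝ᵥ u := by
        rw [Matrix.trace]
        simp only [diag_apply, hW, mul_apply, conjTranspose_apply, hR, Matrix.of_apply]
        rw [show (star u ⬝ᵥ u) = ∑ p : Fin 2 × Fin N, star (u p) * u p from rfl,
          Fintype.sum_prod_type]
        exact Finset.sum_congr rfl fun a _ => Finset.sum_congr rfl fun j _ => by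
          simp [mul_comm]
      rw [this, hu]
    rw [hWtr, Matrix.trace_diagonal] at htr
    have : ((d 0 + d 1 : ℝ) : ℂ) = 1 := by
      push_cast
      rw [← htr, Fin.sum_univ_two]
    exact_mod_cast this
  have hsep := sep_one_sub_outer_rows ψ (d 0) (d 1) h00 h11 h01 hsum
  -- transport back
  have hψu : ψ = (X ⊗ₖ (1 : Matrix (Fin N) (Fin N) ℂ)) *ᵥ u := by
    ext ⟨i,j⟩
    simp only [mulVec, dotProduct, kroneckerMap_apply, hψ, mul_apply, hR, Matrix.of_apply]
    rw [Fintype.sum_prod_type]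
    refine Finset.sum_congr rfl fun a _ => ?_
    simp [Matrix.one_apply, eq_comm]
  have hu' : u = (Xᴴ ⊗ₖ (1 : Matrix (Fin N) (Fin N) ℂ)) *ᵥ ψ := by
    rw [hψu, mulVec_mulVec, ← mul_kronecker_mul, hXuni, one_mul, one_kronecker_one, one_mulVec]
  have hconj : (1 : Matrix (Fin 2 × Fin N) (Fin 2 × Fin N) ℂ) - outer u
      = (Xᴴ ⊗ₖ (1 : Matrix (Fin N) (Fin N) ℂ)) *
        ((1 : Matrix (Fin 2 × Fin N) (Fin 2 × Fin N) ℂ) - outer ψ) *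
        (Xᴴ ⊗ₖ (1 : Matrix (Fin N) (Fin N) ℂ))ᴴ := by
    rw [mul_sub, sub_mul, mul_one]
    congr 1
    · rw [kron_one_conjTranspose, conjTranspose_conjTranspose, ← mul_kronecker_mul, hXuni,
        one_mul, one_kronecker_one]
    · rw [hu', outer_mulVec]
  rw [hconj]
  exact sep_conj Xᴴ hsep


end Sep
end

open Sep in
theorem stmt3 {N : ℕ} (hN : 1 ≤ N)
    (σ : Matrix (Fin 2 × Fin N) (Fin 2 × Fin N) ℂ) (hσ : σ.IsHermitian)
    (hpos : ((σ.trace / ((2 * (N : ℝ) - 1 : ℝ) : ℂ)) •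
        (1 : Matrix (Fin 2 × Fin N) (Fin 2 × Fin N) ℂ) - σ).PosSemidef) :
    IsSeparableMat σ := by
  classical
  set c : ℂ := σ.trace / ((2 * (N : ℝ) - 1 : ℝ) : ℂ) with hc
  set P : Matrix (Fin 2 × Fin N) (Fin 2 × Fin N) ℂ := c • 1 - σ with hP
  have hPpsd : P.PosSemidef := hpos
  have hdenom : ((2 * (N : ℝ) - 1 : ℝ) : ℂ) ≠ 0 := by
    have : (1:ℝ) ≤ 2 * (N:ℝ) - 1 := by
      have : (1:ℝ) ≤ (N:ℝ) := by exact_mod_cast hN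
      linarith
    intro h
    rw [Complex.ofReal_eq_zero] at h
    linarith
  have hPH := hPpsd.1
  set μ : Fin 2 × Fin N → ℝ := hPH.eigenvalues with hμ
  set V : Matrix (Fin 2 × Fin N) (Fin 2 × Fin N) ℂ :=
    (hPH.eigenvectorUnitary : Matrix (Fin 2 × Fin N) (Fin 2 × Fin N) ℂ) with hV
  set u : (Fin 2 × Fin N) → (Fin 2 × Fin N) → ℂ := fun i p => V p i with hu
  have hVuni : star V * V = 1 := Unitary.coe_star_mul_self hPH.eigenvectorUnitary
  have hunit : ∀ i, star (u i) ⬝ᵥ (u i) = 1 := by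
    intro i
    have : star (u i) ⬝ᵥ (u i) = (star V * V) i i := by
      simp only [dotProduct, mul_apply, Matrix.star_apply, Pi.star_apply, hu]
    rw [this, hVuni, Matrix.one_apply_eq]
  have hdecomp : P = ∑ i, (μ i : ℂ) • outer (u i) := by
    have hspec := hPH.spectral_theorem
    ext p q
    rw [hspec]
    rw [Unitary.conjStarAlgAut_apply, Matrix.mul_apply, Matrix.sum_apply]
    refine Finset.sum_congr rfl fun i _ => ?_
    rw [Matrix.mul_diagonal]
    simp only [Matrix.smul_apply, outer_apply, hu, Matrix.star_eq_conjTranspose,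
      conjTranspose_apply, Function.comp_apply, RCLike.ofReal_alg, smul_eq_mul,
      Pi.star_apply]
    ring_nf
    simp [Complex.real_smul]
    simp only [hμ, hV, Matrix.IsHermitian.eigenvectorUnitary_apply]
    ring
  have htr : ∑ i, (μ i : ℂ) = c := by
    have h1 : P.trace = ∑ i, (μ i : ℂ) := by
      have hspec := hPH.spectral_theorem
      rw [hspec, Unitary.conjStarAlgAut_apply, trace_mul_comm, ← Matrix.mul_assoc, hVuni, one_mul, Matrix.trace_diagonal]
      simp [RCLike.ofReal_alg, hμ]
    have h2 : P.trace = c * (2 * N) - σ.trace := by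
      rw [hP, trace_sub, trace_smul, trace_one, smul_eq_mul]
      congr 2
      norm_num [Fintype.card_prod]
    have h3 : σ.trace = c * ((2 * (N : ℝ) - 1 : ℝ) : ℂ) := by
      rw [hc, div_mul_cancel₀ _ hdenom]
    rw [← h1, h2, h3]
    push_cast
    ring
  have hσdecomp : σ = ∑ i, (μ i : ℂ) • ((1 : Matrix (Fin 2 × Fin N) (Fin 2 × Fin N) ℂ) - outer (u i)) := by
    have : ∑ i, (μ i : ℂ) • ((1 : Matrix (Fin 2 × Fin N) (Fin 2 × Fin N) ℂ) - outer (u i))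
        = (∑ i, (μ i : ℂ)) • (1 : Matrix (Fin 2 × Fin N) (Fin 2 × Fin N) ℂ)
          - ∑ i, (μ i : ℂ) • outer (u i) := by
      rw [Finset.sum_smul]
      rw [← Finset.sum_sub_distrib]
      exact Finset.sum_congr rfl fun i _ => by rw [smul_sub]
    rw [this, htr, ← hdecomp, hP]
    abel
  rw [hσdecomp]
  exact sep_sum _ fun i => sep_smul (μ i) (hPpsd.eigenvalues_nonneg i)
    (sep_one_sub_outer (u i) (hunit i))
end

section
/- Sufficient separability criterion 4: Let N ≥ 2 and let σ be a Hermitian matrix on ℂ² ⊗ ℂ^N. If σ - σ̃_A/2 is positive definite, or if σ̃_A - σ/2 is positive definite, then σ is separable. -/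
open Matrix Kronecker
open scoped ComplexOrder

namespace Stmt7Proof

lemma tildeA_apply {N : ℕ} (σ : Matrix (Fin 2 × Fin N) (Fin 2 × Fin N) ℂ) (i k : Fin 2) (j l : Fin N) :
    tildeA σ (i, j) (k, l) =
      (if i = k then σ (0, j) (0, l) + σ (1, j) (1, l) else 0) - σ (i, j) (k, l) := by
  fin_cases i <;> fin_cases k <;>
    simp [tildeA, ptA, pauli2, Matrix.mul_apply, Fintype.sum_prod_type, Fin.sum_univ_two,
      Matrix.kroneckerMap_apply, Matrix.one_apply] <;> ring_nf <;> simp [Complex.I_sq]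

noncomputable def Am : Fin 6 → Matrix (Fin 2) (Fin 2) ℂ :=
  ![!![2,0;0,0], !![0,0;0,2], !![1,1;1,1], !![1,-1;-1,1],
    !![1,-Complex.I;Complex.I,1], !![1,Complex.I;-Complex.I,1]]

noncomputable def B0 {N : ℕ} (σ : Matrix (Fin 2 × Fin N) (Fin 2 × Fin N) ℂ) :
    Matrix (Fin N) (Fin N) ℂ := fun j l => (2 * σ (0,j) (0,l) - σ (1,j) (1,l)) / 6
noncomputable def B1 {N : ℕ} (σ : Matrix (Fin 2 × Fin N) (Fin 2 × Fin N) ℂ) :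
    Matrix (Fin N) (Fin N) ℂ := fun j l => (2 * σ (1,j) (1,l) - σ (0,j) (0,l)) / 6
noncomputable def B2 {N : ℕ} (σ : Matrix (Fin 2 × Fin N) (Fin 2 × Fin N) ℂ) :
    Matrix (Fin N) (Fin N) ℂ := fun j l =>
  (σ (0,j) (0,l) + σ (1,j) (1,l) + 3 * σ (0,j) (1,l) + 3 * σ (1,j) (0,l)) / 12
noncomputable def B3 {N : ℕ} (σ : Matrix (Fin 2 × Fin N) (Fin 2 × Fin N) ℂ) :
    Matrix (Fin N) (Fin N) ℂ := fun j l =>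
  (σ (0,j) (0,l) + σ (1,j) (1,l) - 3 * σ (0,j) (1,l) - 3 * σ (1,j) (0,l)) / 12
noncomputable def B4 {N : ℕ} (σ : Matrix (Fin 2 × Fin N) (Fin 2 × Fin N) ℂ) :
    Matrix (Fin N) (Fin N) ℂ := fun j l =>
  (σ (0,j) (0,l) + σ (1,j) (1,l) + 3 * Complex.I * (σ (0,j) (1,l) - σ (1,j) (0,l))) / 12
noncomputable def B5 {N : ℕ} (σ : Matrix (Fin 2 × Fin N) (Fin 2 × Fin N) ℂ) :
    Matrix (Fin N) (Fin N) ℂ := fun j l =>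
  (σ (0,j) (0,l) + σ (1,j) (1,l) - 3 * Complex.I * (σ (0,j) (1,l) - σ (1,j) (0,l))) / 12

noncomputable def Bm {N : ℕ} (σ : Matrix (Fin 2 × Fin N) (Fin 2 × Fin N) ℂ) :
    Fin 6 → Matrix (Fin N) (Fin N) ℂ :=
  ![B0 σ, B1 σ, B2 σ, B3 σ, B4 σ, B5 σ]

lemma psd_of_sq (A C : Matrix (Fin 2) (Fin 2) ℂ) (h : A = Cᴴ * C) : A.PosSemidef :=
  h ▸ Matrix.posSemidef_conjTranspose_mul_self C

lemma Am_psd (d : Fin 6) : (Am d).PosSemidef := by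
  have h0 : (!![2,0;0,0] : Matrix (Fin 2) (Fin 2) ℂ).PosSemidef :=
    psd_of_sq _ !![1,0;1,0] (by
      ext i j; fin_cases i <;> fin_cases j <;>
        simp [Matrix.mul_apply, Fin.sum_univ_two, Matrix.conjTranspose_apply] <;> norm_num)
  have h1 : (!![0,0;0,2] : Matrix (Fin 2) (Fin 2) ℂ).PosSemidef :=
    psd_of_sq _ !![0,1;0,1] (by
      ext i j; fin_cases i <;> fin_cases j <;>
        simp [Matrix.mul_apply, Fin.sum_univ_two, Matrix.conjTranspose_apply] <;> norm_num)
  have h2 : (!![1,1;1,1] : Matrix (Fin 2) (Fin 2) ℂ).PosSemidef :=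
    psd_of_sq _ !![1,1;0,0] (by
      ext i j; fin_cases i <;> fin_cases j <;>
        simp [Matrix.mul_apply, Fin.sum_univ_two, Matrix.conjTranspose_apply] <;> norm_num)
  have h3 : (!![1,-1;-1,1] : Matrix (Fin 2) (Fin 2) ℂ).PosSemidef :=
    psd_of_sq _ !![1,-1;0,0] (by
      ext i j; fin_cases i <;> fin_cases j <;>
        simp [Matrix.mul_apply, Fin.sum_univ_two, Matrix.conjTranspose_apply] <;> norm_num)
  have h4 : (!![1,-Complex.I;Complex.I,1] : Matrix (Fin 2) (Fin 2) ℂ).PosSemidef :=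
    psd_of_sq _ !![1,-Complex.I;0,0] (by
      ext i j; fin_cases i <;> fin_cases j <;>
        simp [Matrix.mul_apply, Fin.sum_univ_two, Matrix.conjTranspose_apply,
          Complex.conj_I] <;> ring_nf <;> simp [Complex.I_sq])
  have h5 : (!![1,Complex.I;-Complex.I,1] : Matrix (Fin 2) (Fin 2) ℂ).PosSemidef :=
    psd_of_sq _ !![1,Complex.I;0,0] (by
      ext i j; fin_cases i <;> fin_cases j <;>
        simp [Matrix.mul_apply, Fin.sum_univ_two, Matrix.conjTranspose_apply,
          Complex.conj_I] <;> ring_nf <;> simp [Complex.I_sq])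
  fin_cases d
  · exact h0
  · exact h1
  · exact h2
  · exact h3
  · exact h4
  · exact h5

lemma sum_decomp {N : ℕ} (σ : Matrix (Fin 2 × Fin N) (Fin 2 × Fin N) ℂ) :
    σ = ∑ d, Am d ⊗ₖ Bm σ d := by
  have e : ∀ p q, (∑ d, Am d ⊗ₖ Bm σ d) p q =
      ((!![2,0;0,0] : Matrix (Fin 2) (Fin 2) ℂ) ⊗ₖ B0 σ) p q
        + ((!![0,0;0,2] : Matrix (Fin 2) (Fin 2) ℂ) ⊗ₖ B1 σ) p q
        + ((!![1,1;1,1] : Matrix (Fin 2) (Fin 2) ℂ) ⊗ₖ B2 σ) p q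
        + ((!![1,-1;-1,1] : Matrix (Fin 2) (Fin 2) ℂ) ⊗ₖ B3 σ) p q
        + ((!![1,-Complex.I;Complex.I,1] : Matrix (Fin 2) (Fin 2) ℂ) ⊗ₖ B4 σ) p q
        + ((!![1,Complex.I;-Complex.I,1] : Matrix (Fin 2) (Fin 2) ℂ) ⊗ₖ B5 σ) p q := by
    intro p q
    rw [Matrix.sum_apply, Fin.sum_univ_six]
    rfl
  ext ⟨i, j⟩ ⟨k, l⟩
  rw [e]
  fin_cases i <;> fin_cases k <;>
    simp [B0, B1, B2, B3, B4, B5, Matrix.kroneckerMap_apply] <;>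
      ring_nf <;> simp [Complex.I_sq] <;> ring

lemma herm_entry {N : ℕ} {σ : Matrix (Fin 2 × Fin N) (Fin 2 × Fin N) ℂ}
    (hσ : σ.IsHermitian) (p q : Fin 2 × Fin N) : (starRingEnd ℂ) (σ p q) = σ q p := by
  conv_rhs => rw [← hσ]
  rfl

lemma smul_psd {N : ℕ} {X : Matrix (Fin N) (Fin N) ℂ} (hX : X.PosSemidef) (r : ℂ)
    (hr : 0 ≤ r) : (r • X).PosSemidef := by
  have him : r.im = 0 := by simpa using ((Complex.le_def.mp hr).2).symm
  have hreal : star r = r := by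
    rw [Complex.star_def, Complex.conj_eq_iff_im]; exact him
  constructor
  · rw [Matrix.IsHermitian, Matrix.conjTranspose_smul, hX.1, hreal]
  · intro y
    exact hX.smul hr |>.2 y

lemma nn3 : (0:ℂ) ≤ 1/3 := by
  have := Complex.zero_le_real.mpr (by norm_num : (0:ℝ) ≤ 1/3)
  push_cast at this; exact this

lemma nn6 : (0:ℂ) ≤ 1/6 := by
  have := Complex.zero_le_real.mpr (by norm_num : (0:ℝ) ≤ 1/6)
  push_cast at this; exact this

lemma Bpsd_of {N : ℕ} {M : Matrix (Fin 2 × Fin N) (Fin 2 × Fin N) ℂ} (hM : M.PosSemidef)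
    (c : Fin 2 → ℂ) {Bd : Matrix (Fin N) (Fin N) ℂ} (hH : Bd.IsHermitian) (r : ℂ) (hr : 0 ≤ r)
    (hB : ∀ j l, Bd j l = r * ((starRingEnd ℂ) (c 0) * c 0 * M (0,j) (0,l)
      + (starRingEnd ℂ) (c 0) * c 1 * M (0,j) (1,l)
      + (starRingEnd ℂ) (c 1) * c 0 * M (1,j) (0,l)
      + (starRingEnd ℂ) (c 1) * c 1 * M (1,j) (1,l))) : Bd.PosSemidef := by
  set E : Matrix (Fin 2 × Fin N) (Fin N) ℂ :=
    fun p l => c p.1 * (if p.2 = l then 1 else 0) with hE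
  have h1 : (Eᴴ * M * E).PosSemidef := hM.conjTranspose_mul_mul_same E
  have h2 : Bd = r • (Eᴴ * M * E) := by
    ext j l
    rw [Matrix.smul_apply, smul_eq_mul, hB]
    congr 1
    simp only [Matrix.mul_apply, Matrix.conjTranspose_apply]
    simp [hE, Matrix.mul_apply, Matrix.conjTranspose_apply, Fintype.sum_prod_type,
      Fin.sum_univ_two, mul_ite, ite_mul, mul_zero, zero_mul, Finset.sum_ite_eq',
      Finset.sum_ite_eq, apply_ite (starRingEnd ℂ), map_zero]
    ring
  rw [h2]
  exact smul_psd h1 r hr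

end Stmt7Proof

open Stmt7Proof in
/-- Sufficient separability criterion 4. -/
theorem stmt7 {N : ℕ} (hN : 2 ≤ N)
    (σ : Matrix (Fin 2 × Fin N) (Fin 2 × Fin N) ℂ) (hσ : σ.IsHermitian)
    (h : (σ - ((2 : ℂ))⁻¹ • tildeA σ).PosDef ∨ (tildeA σ - ((2 : ℂ))⁻¹ • σ).PosDef) :
    IsSeparableMat σ := by
  have hs := herm_entry hσ
  have hB0 : (B0 σ).IsHermitian := by
    ext j l; simp [B0, Matrix.conjTranspose_apply, map_div₀, map_sub, _root_.map_mul, hs]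
  have hB1 : (B1 σ).IsHermitian := by
    ext j l; simp [B1, Matrix.conjTranspose_apply, map_div₀, map_sub, _root_.map_mul, hs]
  have hB2 : (B2 σ).IsHermitian := by
    ext j l
    simp [B2, Matrix.conjTranspose_apply, map_div₀, map_sub, _root_.map_mul, map_add, hs]
    ring
  have hB3 : (B3 σ).IsHermitian := by
    ext j l
    simp [B3, Matrix.conjTranspose_apply, map_div₀, map_sub, _root_.map_mul, map_add, hs]
    ring
  have hB4 : (B4 σ).IsHermitian := by
    ext j l
    simp [B4, Matrix.conjTranspose_apply, map_div₀, map_sub, _root_.map_mul, map_add,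
      Complex.conj_I, hs]
    ring
  have hB5 : (B5 σ).IsHermitian := by
    ext j l
    simp [B5, Matrix.conjTranspose_apply, map_div₀, map_sub, _root_.map_mul, map_add,
      Complex.conj_I, hs]
    ring
  have hBpsd : ∀ d, (Bm σ d).PosSemidef := by
    rcases h with h | h
    · have hM := h.posSemidef
      intro d
      fin_cases d
      · exact Bpsd_of hM ![1,0] hB0 (1/3) nn3 (fun j l => by
          show B0 σ j l = _
          simp [B0, tildeA_apply, Matrix.sub_apply, Matrix.smul_apply, smul_eq_mul]; ring)
      · exact Bpsd_of hM ![0,1] hB1 (1/3) nn3 (fun j l => by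
          show B1 σ j l = _
          simp [B1, tildeA_apply, Matrix.sub_apply, Matrix.smul_apply, smul_eq_mul]; ring)
      · exact Bpsd_of hM ![1,1] hB2 (1/6) nn6 (fun j l => by
          show B2 σ j l = _
          simp [B2, tildeA_apply, Matrix.sub_apply, Matrix.smul_apply, smul_eq_mul]; ring)
      · exact Bpsd_of hM ![1,-1] hB3 (1/6) nn6 (fun j l => by
          show B3 σ j l = _
          simp [B3, tildeA_apply, Matrix.sub_apply, Matrix.smul_apply, smul_eq_mul]; ring)
      · exact Bpsd_of hM ![1,Complex.I] hB4 (1/6) nn6 (fun j l => by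
          show B4 σ j l = _
          simp [B4, tildeA_apply, Matrix.sub_apply, Matrix.smul_apply, smul_eq_mul,
            Complex.conj_I]
          ring_nf; all_goals simp [Complex.I_sq])
      · exact Bpsd_of hM ![1,-Complex.I] hB5 (1/6) nn6 (fun j l => by
          show B5 σ j l = _
          simp [B5, tildeA_apply, Matrix.sub_apply, Matrix.smul_apply, smul_eq_mul,
            Complex.conj_I]
          ring_nf; all_goals simp [Complex.I_sq])
    · have hM := h.posSemidef
      intro d
      fin_cases d
      · exact Bpsd_of hM ![0,1] hB0 (1/3) nn3 (fun j l => by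
          show B0 σ j l = _
          simp [B0, tildeA_apply, Matrix.sub_apply, Matrix.smul_apply, smul_eq_mul]; ring)
      · exact Bpsd_of hM ![1,0] hB1 (1/3) nn3 (fun j l => by
          show B1 σ j l = _
          simp [B1, tildeA_apply, Matrix.sub_apply, Matrix.smul_apply, smul_eq_mul]; ring)
      · exact Bpsd_of hM ![1,-1] hB2 (1/6) nn6 (fun j l => by
          show B2 σ j l = _
          simp [B2, tildeA_apply, Matrix.sub_apply, Matrix.smul_apply, smul_eq_mul]; ring)
      · exact Bpsd_of hM ![1,1] hB3 (1/6) nn6 (fun j l => by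
          show B3 σ j l = _
          simp [B3, tildeA_apply, Matrix.sub_apply, Matrix.smul_apply, smul_eq_mul]; ring)
      · exact Bpsd_of hM ![1,-Complex.I] hB4 (1/6) nn6 (fun j l => by
          show B4 σ j l = _
          simp [B4, tildeA_apply, Matrix.sub_apply, Matrix.smul_apply, smul_eq_mul,
            Complex.conj_I]
          ring_nf; all_goals simp [Complex.I_sq])
      · exact Bpsd_of hM ![1,Complex.I] hB5 (1/6) nn6 (fun j l => by
          show B5 σ j l = _
          simp [B5, tildeA_apply, Matrix.sub_apply, Matrix.smul_apply, smul_eq_mul,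
            Complex.conj_I]
          ring_nf; all_goals simp [Complex.I_sq])
  exact ⟨6, Am, Bm σ, Am_psd, hBpsd, sum_decomp σ⟩
end

section
/- Let M, N be even, let U be a unitary on ℂ^M with Uᵀ = -U and V a unitary on ℂ^N with Vᵀ = -V, and for reals α, β, γ, δ define the map Λ(ρ) := Tr(ρ)·𝟙_{MN} + α·ρ + β·(U ⊗ 𝟙_N)·ρ^{T_A}·(U ⊗ 𝟙_N)† + γ·(𝟙_M ⊗ V)·ρ^{T_B}·(𝟙_M ⊗ V)† + δ·(U ⊗ V)·ρᵀ·(U ⊗ V)† on matrices on ℂ^M ⊗ ℂ^N. Assume that Λ(ρ) is separable for every positive semidefinite ρ. Then for all positive semidefinite matrices P and Q on ℂ^M ⊗ ℂ^N, the matrix Λ(P + Q^{T_A}) is separable. -/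
open Matrix Kronecker
open scoped ComplexOrder

section Aux

variable {M N : ℕ}

private abbrev MatMN (M N : ℕ) := Matrix (Fin M × Fin N) (Fin M × Fin N) ℂ

lemma kron_conjT (A : Matrix (Fin M) (Fin M) ℂ) (B : Matrix (Fin N) (Fin N) ℂ) :
    (A ⊗ₖ B)ᴴ = Aᴴ ⊗ₖ Bᴴ := by
  ext ⟨i,j⟩ ⟨k,l⟩
  simp [conjTranspose_apply, kroneckerMap_apply, mul_comm]

lemma kron_T (A : Matrix (Fin M) (Fin M) ℂ) (B : Matrix (Fin N) (Fin N) ℂ) :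
    (A ⊗ₖ B)ᵀ = Aᵀ ⊗ₖ Bᵀ := by
  ext ⟨i,j⟩ ⟨k,l⟩
  simp [transpose_apply, kroneckerMap_apply]

lemma neg_kron (A : Matrix (Fin M) (Fin M) ℂ) (B : Matrix (Fin N) (Fin N) ℂ) :
    (-A) ⊗ₖ B = -(A ⊗ₖ B) := by
  ext ⟨i,j⟩ ⟨k,l⟩
  simp [kroneckerMap_apply]

lemma ptA_mul (A C : Matrix (Fin M) (Fin M) ℂ) (B D : Matrix (Fin N) (Fin N) ℂ)
    (ρ : MatMN M N) :
    ptA ((A ⊗ₖ B) * ρ * (C ⊗ₖ D)) = (Cᵀ ⊗ₖ B) * ptA ρ * (Aᵀ ⊗ₖ D) := by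
  ext ⟨i,j⟩ ⟨k,l⟩
  simp only [ptA, Matrix.mul_apply, kroneckerMap_apply, transpose_apply,
    Finset.sum_mul, Finset.mul_sum]
  rw [← Fintype.sum_prod_type', ← Fintype.sum_prod_type']
  exact Fintype.sum_equiv ⟨fun p => ((p.2.1, p.1.2), (p.1.1, p.2.2)),
    fun p => ((p.2.1, p.1.2), (p.1.1, p.2.2)), fun _ => rfl, fun _ => rfl⟩ _ _
    (fun p => by simp; ring)

lemma ptB_mul (A C : Matrix (Fin M) (Fin M) ℂ) (B D : Matrix (Fin N) (Fin N) ℂ)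
    (ρ : MatMN M N) :
    ptB ((A ⊗ₖ B) * ρ * (C ⊗ₖ D)) = (A ⊗ₖ Dᵀ) * ptB ρ * (C ⊗ₖ Bᵀ) := by
  ext ⟨i,j⟩ ⟨k,l⟩
  simp only [ptB, Matrix.mul_apply, kroneckerMap_apply, transpose_apply,
    Finset.sum_mul, Finset.mul_sum]
  rw [← Fintype.sum_prod_type', ← Fintype.sum_prod_type']
  exact Fintype.sum_equiv ⟨fun p => ((p.1.1,p.2.2),(p.2.1,p.1.2)),
    fun p => ((p.1.1,p.2.2),(p.2.1,p.1.2)), fun _ => rfl, fun _ => rfl⟩ _ _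
    (fun p => by simp; ring)

lemma ptA_ptA (ρ : MatMN M N) : ptA (ptA ρ) = ρ := rfl

lemma ptA_ptB (ρ : MatMN M N) : ptA (ptB ρ) = ρᵀ := rfl

lemma ptB_ptA (ρ : MatMN M N) : ptB (ptA ρ) = ρᵀ := rfl

lemma ptA_transpose (ρ : MatMN M N) : ptA (ρᵀ) = ptB ρ := rfl

lemma transpose_ptA (ρ : MatMN M N) : (ptA ρ)ᵀ = ptB ρ := rfl

lemma ptA_add (ρ τ : MatMN M N) : ptA (ρ + τ) = ptA ρ + ptA τ := rfl

lemma ptB_add (ρ τ : MatMN M N) : ptB (ρ + τ) = ptB ρ + ptB τ := rfl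

lemma ptA_smul (c : ℂ) (ρ : MatMN M N) : ptA (c • ρ) = c • ptA ρ := rfl

lemma ptA_one : ptA (1 : MatMN M N) = 1 := by
  ext ⟨i,j⟩ ⟨k,l⟩
  by_cases h : i = k <;> by_cases h2 : j = l <;>
    simp [ptA, Matrix.one_apply, Prod.ext_iff, h, h2, eq_comm]

lemma trace_ptA (ρ : MatMN M N) : (ptA ρ).trace = ρ.trace := by
  simp [Matrix.trace, Matrix.diag, ptA]

lemma ptA_kron (A : Matrix (Fin M) (Fin M) ℂ) (B : Matrix (Fin N) (Fin N) ℂ) :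
    ptA (A ⊗ₖ B) = Aᵀ ⊗ₖ B := rfl

lemma sep_add {σ τ : MatMN M N} (hσ : IsSeparableMat σ) (hτ : IsSeparableMat τ) :
    IsSeparableMat (σ + τ) := by
  obtain ⟨k, A, B, hA, hB, rfl⟩ := hσ
  obtain ⟨l, C, D, hC, hD, rfl⟩ := hτ
  refine ⟨k + l, Fin.append A C, Fin.append B D, ?_, ?_, ?_⟩
  · intro i
    refine Fin.addCases (fun j => ?_) (fun j => ?_) i
    · rw [Fin.append_left]; exact hA j
    · rw [Fin.append_right]; exact hC j
  · intro i
    refine Fin.addCases (fun j => ?_) (fun j => ?_) i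
    · rw [Fin.append_left]; exact hB j
    · rw [Fin.append_right]; exact hD j
  · rw [Fin.sum_univ_add]
    simp [Fin.append_left, Fin.append_right]

lemma sep_ptA {σ : MatMN M N} (hσ : IsSeparableMat σ) : IsSeparableMat (ptA σ) := by
  obtain ⟨k, A, B, hA, hB, rfl⟩ := hσ
  refine ⟨k, fun i => (A i)ᵀ, B, fun i => (hA i).transpose, hB, ?_⟩
  have : ptA (∑ i, A i ⊗ₖ B i) = ∑ i, ptA (A i ⊗ₖ B i) := by
    ext p q; simp [ptA, Matrix.sum_apply]
  rw [this]
  simp [ptA_kron]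

lemma sep_conj {σ : MatMN M N} (hσ : IsSeparableMat σ)
    (X : Matrix (Fin M) (Fin M) ℂ) (Y : Matrix (Fin N) (Fin N) ℂ) :
    IsSeparableMat ((X ⊗ₖ Y) * σ * (X ⊗ₖ Y)ᴴ) := by
  obtain ⟨k, A, B, hA, hB, rfl⟩ := hσ
  refine ⟨k, fun i => X * A i * Xᴴ, fun i => Y * B i * Yᴴ,
    fun i => (hA i).mul_mul_conjTranspose_same X,
    fun i => (hB i).mul_mul_conjTranspose_same Y, ?_⟩
  rw [kron_conjT, Finset.mul_sum, Finset.sum_mul]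
  exact Finset.sum_congr rfl fun i _ => by rw [mul_kronecker_mul, mul_kronecker_mul]

end Aux

theorem stmt15 {M N : ℕ} (hM : Even M) (hN : Even N)
    (U : Matrix (Fin M) (Fin M) ℂ) (hUU : Uᴴ * U = 1) (hUT : Uᵀ = -U)
    (V : Matrix (Fin N) (Fin N) ℂ) (hVV : Vᴴ * V = 1) (hVT : Vᵀ = -V)
    (α β γ δ : ℝ)
    (Λ : Matrix (Fin M × Fin N) (Fin M × Fin N) ℂ →
          Matrix (Fin M × Fin N) (Fin M × Fin N) ℂ)
    (hΛ : ∀ ρ, Λ ρ = ρ.trace • (1 : Matrix (Fin M × Fin N) (Fin M × Fin N) ℂ)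
        + (α : ℂ) • ρ
        + (β : ℂ) • ((U ⊗ₖ (1 : Matrix (Fin N) (Fin N) ℂ)) * ptA ρ *
            (U ⊗ₖ (1 : Matrix (Fin N) (Fin N) ℂ))ᴴ)
        + (γ : ℂ) • (((1 : Matrix (Fin M) (Fin M) ℂ) ⊗ₖ V) * ptB ρ *
            ((1 : Matrix (Fin M) (Fin M) ℂ) ⊗ₖ V)ᴴ)
        + (δ : ℂ) • ((U ⊗ₖ V) * ρᵀ * (U ⊗ₖ V)ᴴ))
    (hsep : ∀ ρ : Matrix (Fin M × Fin N) (Fin M × Fin N) ℂ,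
      ρ.PosSemidef → IsSeparableMat (Λ ρ))
    (P Q : Matrix (Fin M × Fin N) (Fin M × Fin N) ℂ)
    (hP : P.PosSemidef) (hQ : Q.PosSemidef) :
    IsSeparableMat (Λ (P + ptA Q)) := by
  -- basic unitary facts
  have hU2 : U * Uᴴ = 1 := mul_eq_one_comm.mp hUU
  have hV2 : V * Vᴴ = 1 := mul_eq_one_comm.mp hVV
  have hUc : (Uᴴ)ᵀ = -(Uᴴ) := by
    ext i j
    have h := congrFun (congrFun hUT j) i
    simp only [transpose_apply, neg_apply] at h ⊢
    simp [conjTranspose_apply, h]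
  have hVc : (Vᴴ)ᵀ = -(Vᴴ) := by
    ext i j
    have h := congrFun (congrFun hVT j) i
    simp only [transpose_apply, neg_apply] at h ⊢
    simp [conjTranspose_apply, h]
  -- kron pair collapse lemmas
  have kk2 : ∀ (A C : Matrix (Fin M) (Fin M) ℂ) (B D : Matrix (Fin N) (Fin N) ℂ),
      (A ⊗ₖ B) * (C ⊗ₖ D) = (A * C) ⊗ₖ (B * D) := fun A C B D =>
    (mul_kronecker_mul A C B D).symm
  have kk : ∀ (A C : Matrix (Fin M) (Fin M) ℂ) (B D : Matrix (Fin N) (Fin N) ℂ)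
      (X : Matrix (Fin M × Fin N) (Fin M × Fin N) ℂ),
      (A ⊗ₖ B) * ((C ⊗ₖ D) * X) = ((A * C) ⊗ₖ (B * D)) * X := fun A C B D X => by
    rw [← Matrix.mul_assoc, kk2]
  -- partial transpose conjugation moves
  have pA_W : ∀ X : Matrix (Fin M × Fin N) (Fin M × Fin N) ℂ,
      ptA ((U ⊗ₖ (1 : Matrix (Fin N) (Fin N) ℂ)) * X * (Uᴴ ⊗ₖ 1)) =
        (Uᴴ ⊗ₖ 1) * ptA X * (U ⊗ₖ 1) := by
    intro X
    rw [ptA_mul, hUc, hUT]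
    simp only [neg_kron, Matrix.neg_mul, Matrix.mul_neg, neg_neg]
  have pA_Wc : ∀ X : Matrix (Fin M × Fin N) (Fin M × Fin N) ℂ,
      ptA ((Uᴴ ⊗ₖ (1 : Matrix (Fin N) (Fin N) ℂ)) * X * (U ⊗ₖ 1)) =
        (U ⊗ₖ 1) * ptA X * (Uᴴ ⊗ₖ 1) := by
    intro X
    rw [ptA_mul, hUc, hUT]
    simp only [neg_kron, Matrix.neg_mul, Matrix.mul_neg, neg_neg]
  have pA_Vb : ∀ X : Matrix (Fin M × Fin N) (Fin M × Fin N) ℂ,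
      ptA (((1 : Matrix (Fin M) (Fin M) ℂ) ⊗ₖ V) * X * (1 ⊗ₖ Vᴴ)) =
        (1 ⊗ₖ V) * ptA X * (1 ⊗ₖ Vᴴ) := by
    intro X
    rw [ptA_mul, Matrix.transpose_one]
  have pA_UV : ∀ X : Matrix (Fin M × Fin N) (Fin M × Fin N) ℂ,
      ptA ((U ⊗ₖ V) * X * (Uᴴ ⊗ₖ Vᴴ)) = (Uᴴ ⊗ₖ V) * ptA X * (U ⊗ₖ Vᴴ) := by
    intro X
    rw [ptA_mul, hUc, hUT]
    simp only [neg_kron, Matrix.neg_mul, Matrix.mul_neg, neg_neg]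
  have pB_W : ∀ X : Matrix (Fin M × Fin N) (Fin M × Fin N) ℂ,
      ptB ((U ⊗ₖ (1 : Matrix (Fin N) (Fin N) ℂ)) * X * (Uᴴ ⊗ₖ 1)) =
        (U ⊗ₖ 1) * ptB X * (Uᴴ ⊗ₖ 1) := by
    intro X
    rw [ptB_mul, Matrix.transpose_one]
  have hQt : ∀ X : Matrix (Fin M × Fin N) (Fin M × Fin N) ℂ,
      ((U ⊗ₖ (1 : Matrix (Fin N) (Fin N) ℂ)) * X * (Uᴴ ⊗ₖ 1))ᵀ =
        (Uᴴ ⊗ₖ 1) * Xᵀ * (U ⊗ₖ 1) := by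
    intro X
    rw [Matrix.transpose_mul, Matrix.transpose_mul, kron_T, kron_T, Matrix.transpose_one,
      hUc, hUT]
    simp only [neg_kron, Matrix.neg_mul, Matrix.mul_neg, neg_neg, Matrix.mul_assoc]
  have htr : ((U ⊗ₖ (1 : Matrix (Fin N) (Fin N) ℂ)) * Q * (Uᴴ ⊗ₖ 1)).trace = Q.trace := by
    rw [Matrix.trace_mul_cycle, kk2]; simp [hUU]
  -- the key identity
  have key : Λ (ptA Q) =
      (U ⊗ₖ (1 : Matrix (Fin N) (Fin N) ℂ)) *
        ptA (Λ ((U ⊗ₖ (1 : Matrix (Fin N) (Fin N) ℂ)) * Q *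
          (U ⊗ₖ (1 : Matrix (Fin N) (Fin N) ℂ))ᴴ)) *
        (U ⊗ₖ (1 : Matrix (Fin N) (Fin N) ℂ))ᴴ := by
    rw [hΛ, hΛ]
    simp only [kron_conjT, Matrix.conjTranspose_one]
    rw [htr]
    simp only [trace_ptA, ptA_add, ptA_smul, ptA_one, pA_W, pA_Wc, pA_Vb, pA_UV, pB_W, hQt,
      ptA_ptA, ptA_ptB, ptA_transpose, transpose_ptA, ptB_ptA,
      Matrix.mul_add, Matrix.add_mul, Matrix.mul_smul, Matrix.smul_mul]
    simp only [Matrix.mul_assoc, kk, kk2, hUU, hU2, hVV, hV2, Matrix.mul_one, Matrix.one_mul,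
      one_kronecker_one]
  -- additivity of Λ on the given decomposition
  have hadd : Λ (P + ptA Q) = Λ P + Λ (ptA Q) := by
    rw [hΛ, hΛ, hΛ]
    simp only [Matrix.trace_add, ptA_add, ptB_add, Matrix.transpose_add, add_smul, smul_add,
      Matrix.mul_add, Matrix.add_mul]
    abel
  rw [hadd]
  refine sep_add (hsep P hP) ?_
  rw [key]
  exact sep_conj (sep_ptA (hsep _ (hQ.mul_mul_conjTranspose_same _))) U 1
end
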